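/- Along any trajectory of the closed-loop SRB system, the storage function V = (1/2) vᵀ M_d v + (1/2) k_p ‖p_e‖² + 2 k_o (1 − η_e) is differentiable in time and its derivative satisfies the exact identity V̇(t) = − v(t)ᵀ D_d v(t) − k_r f(t) ( k_p ‖p_e(t)‖² + k_o ‖ε_e(t)‖² ) + v(t)ᵀ F_h(t) for all t. -/

import Mathlib

open Matrix


lemma hasDerivAt_dot {n : ℕ} {u w : ℝ → Fin n → ℝ} {u' w' : Fin n → ℝ} {t : ℝ}
    (hu : HasDerivAt u u' t) (hw : HasDerivAt w w' t) :
    HasDerivAt (fun s => u s ⬝ᵥ w s) (u' ⬝ᵥ w t + u t ⬝ᵥ w') t := by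
  have hu' := hasDerivAt_pi.mp hu
  have hw' := hasDerivAt_pi.mp hw
  have h : HasDerivAt (fun s => ∑ i, u s i * w s i)
      (∑ i, (u' i * w t i + u t i * w' i)) t :=
    HasDerivAt.fun_sum fun i _ => (hu' i).mul (hw' i)
  simpa [dotProduct, Finset.sum_add_distrib] using h

lemma append_dot (a b c d : Fin 3 → ℝ) :
    (Fin.append a b : Fin 6 → ℝ) ⬝ᵥ (Fin.append c d : Fin 6 → ℝ) = a ⬝ᵥ c + b ⬝ᵥ d := by
  have : ∑ i : Fin (3+3), Fin.append a b i * Fin.append c d i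
      = ∑ i : Fin 3, a i * c i + ∑ i : Fin 3, b i * d i := by
    have h2 : ∀ i : Fin 3, Fin.append a b (Fin.addNat i 3) * Fin.append c d (Fin.addNat i 3)
        = b i * d i := by
      intro i
      have h1 : i.addNat 3 = Fin.natAdd 3 i := by ext; simp [Nat.add_comm]
      rw [h1, Fin.append_right, Fin.append_right]
    rw [Fin.sum_univ_add]
    simp [h2]
  simpa [dotProduct] using this


lemma hasDerivAt_mulVec' {n m : ℕ} (A : Matrix (Fin m) (Fin n) ℝ)
    {u : ℝ → Fin n → ℝ} {u' : Fin n → ℝ} {t : ℝ}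
    (hu : HasDerivAt u u' t) :
    HasDerivAt (fun s => A.mulVec (u s)) (A.mulVec u') t := by
  rw [hasDerivAt_pi] at hu ⊢
  intro i
  have h : HasDerivAt (fun s => ∑ j, A i j * u s j) (∑ j, A i j * u' j) t :=
    HasDerivAt.fun_sum fun j _ => (hu j).const_mul (A i j)
  simpa [Matrix.mulVec, dotProduct] using h

/-- along any trajectory of the closed-loop SRB system
(admittance model `M_d v̇ + D_d v = F_h + u_c` with
`u_c = (k_p p_e, k_o R_eᵀ ε_e)`, god-object dynamics `ṗ_g = −k_r f p_e`,
`ω_g = −k_r f ε_e`, and quaternion-error kinematics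
`η̇_e = −(1/2) ε_eᵀ (ω_g − R_e ω)`), the storage function
`V = (1/2) vᵀ M_d v + (1/2) k_p ‖p_e‖² + 2 k_o (1 − η_e)` is differentiable
in time, with
`V̇(t) = −vᵀ D_d v − k_r f (k_p ‖p_e‖² + k_o ‖ε_e‖²) + vᵀ F_h` for all `t`
(squared Euclidean norms written via dot products, `v = (ṗ, ω) ∈ ℝ⁶`). -/
theorem storage_function_derivative
    (Md Dd : Matrix (Fin 6) (Fin 6) ℝ) (kp ko kr : ℝ) (f : ℝ → ℝ)
    (Fh : ℝ → Fin 6 → ℝ)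
    (p pg ω εe pdot : ℝ → Fin 3 → ℝ) (ηe : ℝ → ℝ)
    (Re : ℝ → Matrix (Fin 3) (Fin 3) ℝ)
    (v vdot : ℝ → Fin 6 → ℝ)
    (hMd : Md.PosDef) (hDd : Dd.PosDef)
    (hkp : 0 < kp) (hko : 0 < ko) (hkr : 0 < kr)
    (hf : ∀ t : ℝ, f t ∈ Set.Icc (0:ℝ) 1)
    (hRe : ∀ t : ℝ, (Re t)ᵀ * Re t = 1)
    (hRedet : ∀ t : ℝ, (Re t).det = 1)
    -- `v = (ṗ, ω)`:
    (hp : ∀ t : ℝ, HasDerivAt p (pdot t) t)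
    (hv : ∀ t : ℝ, v t = Fin.append (pdot t) (ω t))
    (hvdot : ∀ t : ℝ, HasDerivAt v (vdot t) t)
    -- (i) admittance model with `u_c = (k_p p_e, k_o R_eᵀ ε_e)`:
    (hadm : ∀ t : ℝ,
      Md.mulVec (vdot t) + Dd.mulVec (v t) =
        Fh t + Fin.append (kp • (pg t - p t)) (ko • (Re t)ᵀ.mulVec (εe t)))
    -- (ii) god-object dynamics:
    (hpg : ∀ t : ℝ, HasDerivAt pg ((-(kr * f t)) • (pg t - p t)) t)
    -- (iii) quaternion-error kinematics, with `ω_g = −k_r f ε_e`: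
    (hηe : ∀ t : ℝ, HasDerivAt ηe
      (-(1 / 2) * (εe t ⬝ᵥ ((-(kr * f t)) • εe t - (Re t).mulVec (ω t)))) t) :
    ∀ t : ℝ,
      HasDerivAt (fun s : ℝ =>
          (1 / 2) * (v s ⬝ᵥ Md.mulVec (v s)) +
            (1 / 2) * kp * ((pg s - p s) ⬝ᵥ (pg s - p s)) +
            2 * ko * (1 - ηe s))
        (-(v t ⬝ᵥ Dd.mulVec (v t)) -
            kr * f t * (kp * ((pg t - p t) ⬝ᵥ (pg t - p t)) +
              ko * (εe t ⬝ᵥ εe t)) +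
          v t ⬝ᵥ Fh t) t := by
  intro t
  obtain ⟨pe, hpe_def⟩ : ∃ q : Fin 3 → ℝ, q = pg t - p t := ⟨_, rfl⟩
  rw [← hpe_def]
  have hpe : HasDerivAt (fun s => pg s - p s) ((-(kr * f t)) • pe - pdot t) t := by
    rw [hpe_def]; exact (hpg t).sub (hp t)
  have h1 : HasDerivAt (fun s => (1 / 2) * (v s ⬝ᵥ Md.mulVec (v s)))
      ((1 / 2) * (vdot t ⬝ᵥ Md.mulVec (v t) + v t ⬝ᵥ Md.mulVec (vdot t))) t :=
    (hasDerivAt_dot (hvdot t) (hasDerivAt_mulVec' Md (hvdot t))).const_mul _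
  have h2 : HasDerivAt (fun s => (1 / 2) * kp * ((pg s - p s) ⬝ᵥ (pg s - p s)))
      ((1 / 2) * kp * (((-(kr * f t)) • pe - pdot t) ⬝ᵥ pe
        + pe ⬝ᵥ ((-(kr * f t)) • pe - pdot t))) t := by
    have h := (hasDerivAt_dot hpe hpe).const_mul ((1 / 2) * kp)
    rw [← hpe_def] at h
    exact h
  have h3 : HasDerivAt (fun s => 2 * ko * (1 - ηe s))
      (2 * ko * (0 - (-(1 / 2) * (εe t ⬝ᵥ ((-(kr * f t)) • εe t - (Re t).mulVec (ω t)))))) t :=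
    ((hasDerivAt_const t (1:ℝ)).sub (hηe t)).const_mul _
  have H := (h1.add h2).add h3
  refine H.congr_deriv ?_
  have hsym : Mdᵀ = Md := hMd.isHermitian
  have e1 : vdot t ⬝ᵥ Md.mulVec (v t) = v t ⬝ᵥ Md.mulVec (vdot t) := by
    rw [dotProduct_mulVec (v t), ← vecMul_transpose, hsym, dotProduct_comm]
  have e2 : Md.mulVec (vdot t) =
      Fh t + Fin.append (kp • pe) (ko • (Re t)ᵀ.mulVec (εe t)) - Dd.mulVec (v t) := by
    rw [hpe_def, ← hadm t]
    exact (add_sub_cancel_right _ _).symm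
  have e3 : v t ⬝ᵥ Fin.append (kp • pe) (ko • (Re t)ᵀ.mulVec (εe t))
      = kp * (pdot t ⬝ᵥ pe) + ko * ((Re t).mulVec (ω t) ⬝ᵥ εe t) := by
    rw [hv t, append_dot, dotProduct_smul, dotProduct_smul,
      dotProduct_mulVec (ω t), vecMul_transpose]
    simp [smul_eq_mul]
  have e7 : pe ⬝ᵥ pdot t = pdot t ⬝ᵥ pe := dotProduct_comm _ _
  have e8 : εe t ⬝ᵥ (Re t).mulVec (ω t) = (Re t).mulVec (ω t) ⬝ᵥ εe t := dotProduct_comm _ _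
  simp only [e1, e2, dotProduct_sub, dotProduct_add, dotProduct_smul, sub_dotProduct,
    smul_dotProduct, smul_eq_mul, e3, e7, e8]
  ring
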